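/- For a finite simple graph G with at least one edge, μ^{(p)}(G) converges to μ^{(∞)}(G) as p → ∞, where μ^{(∞)}(G) = max_{‖x‖_∞ = 1} ∑_{ij∈E}(x_i - x_j)^2. -/

import Mathlib

open scoped Classical
open Finset

/-- The `p`-norm of a vector. -/
noncomputable def pNorm {V : Type*} [Fintype V] (p : ℝ) (x : V → ℝ) : ℝ :=
  (∑ i, |x i| ^ p) ^ (1 / p)

/-- The sup-norm of a vector. -/
noncomputable def supNorm {V : Type*} [Fintype V] (x : V → ℝ) : ℝ :=
  ⨆ i, |x i|

/-- The Laplacian quadratic form `∑_{ij ∈ E} (x_i - x_j)^2` of a graph. -/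
noncomputable def quadForm {V : Type*} [Fintype V] (G : SimpleGraph V) (x : V → ℝ) : ℝ :=
  (∑ i, ∑ j, if G.Adj i j then (x i - x j) ^ 2 else 0) / 2

/-- The `p`-spectral radius of the Laplacian: `μ⁽ᵖ⁾(G) = max_{‖x‖ₚ = 1} xᵀLx`. -/
noncomputable def mu {V : Type*} [Fintype V] (G : SimpleGraph V) (p : ℝ) : ℝ :=
  sSup {y | ∃ x : V → ℝ, pNorm p x = 1 ∧ quadForm G x = y}

/-- `μ⁽^∞⁾(G) = max_{‖x‖_∞ = 1} xᵀLx`. -/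
noncomputable def muInf {V : Type*} [Fintype V] (G : SimpleGraph V) : ℝ :=
  sSup {y | ∃ x : V → ℝ, supNorm x = 1 ∧ quadForm G x = y}

section Aux
variable {n : ℕ} (G : SimpleGraph (Fin n))

lemma quadForm_nonneg (x : Fin n → ℝ) : 0 ≤ quadForm G x := by
  apply div_nonneg _ (by norm_num)
  refine Finset.sum_nonneg fun i _ => Finset.sum_nonneg fun j _ => ?_
  split <;> positivity

lemma quadForm_smul (c : ℝ) (x : Fin n → ℝ) :
    quadForm G (fun i => c * x i) = c ^ 2 * quadForm G x := by
  unfold quadForm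
  rw [← mul_div_assoc]
  congr 1
  rw [Finset.mul_sum]
  refine Finset.sum_congr rfl fun i _ => ?_
  rw [Finset.mul_sum]
  refine Finset.sum_congr rfl fun j _ => ?_
  split <;> ring

lemma abs_le_supNorm (x : Fin n → ℝ) (i : Fin n) : |x i| ≤ supNorm x := by
  unfold supNorm
  exact le_ciSup (f := fun j => |x j|) (Set.Finite.bddAbove (Set.finite_range _)) i

lemma exists_supNorm_eq [Nonempty (Fin n)] (x : Fin n → ℝ) : ∃ i, supNorm x = |x i| := by
  obtain ⟨i, hi⟩ := Finite.exists_max (fun i => |x i|)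
  refine ⟨i, le_antisymm ?_ (abs_le_supNorm x i)⟩
  unfold supNorm
  exact ciSup_le hi

lemma supNorm_div [Nonempty (Fin n)] (x : Fin n → ℝ) {c : ℝ} (hc : 0 < c) :
    supNorm (fun i => x i / c) = supNorm x / c := by
  obtain ⟨i, hi⟩ := exists_supNorm_eq x
  have hmax : ∀ j, |x j| ≤ |x i| := fun j => hi ▸ abs_le_supNorm x j
  have h1 : supNorm (fun j => x j / c) = |x i / c| := by
    refine le_antisymm ?_ (abs_le_supNorm (fun j => x j / c) i)
    unfold supNorm
    refine ciSup_le fun j => ?_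
    rw [abs_div, abs_div, abs_of_pos hc]
    exact (div_le_div_iff_of_pos_right hc).2 (hmax j)
  rw [h1, hi, abs_div, abs_of_pos hc]

lemma sum_eq_one_of_pNorm {p : ℝ} (hp : 0 < p) {x : Fin n → ℝ} (hx : pNorm p x = 1) :
    ∑ i, |x i| ^ p = 1 := by
  have h0 : (0:ℝ) ≤ ∑ i, |x i| ^ p :=
    Finset.sum_nonneg fun i _ => Real.rpow_nonneg (abs_nonneg _) _
  have := congrArg (· ^ p) hx
  simpa [pNorm, one_div, Real.rpow_inv_rpow h0 hp.ne'] using this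

lemma abs_le_one_of_pNorm {p : ℝ} (hp : 0 < p) {x : Fin n → ℝ} (hx : pNorm p x = 1)
    (i : Fin n) : |x i| ≤ 1 := by
  have hsum := sum_eq_one_of_pNorm hp hx
  have hle : |x i| ^ p ≤ 1 := by
    rw [← hsum]
    exact Finset.single_le_sum (fun j _ => Real.rpow_nonneg (abs_nonneg _) _) (Finset.mem_univ i)
  by_contra h
  push_neg at h
  have : (1:ℝ) < |x i| ^ p :=
    (Real.one_lt_rpow_iff_of_pos (lt_trans one_pos h)).2 (Or.inl ⟨h, hp⟩)
  linarith

lemma pNorm_div {p : ℝ} (hp : 0 < p) (x : Fin n → ℝ) {c : ℝ} (hc : 0 < c) :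
    pNorm p (fun i => x i / c) = pNorm p x / c := by
  have h0 : (0:ℝ) ≤ ∑ i, |x i| ^ p :=
    Finset.sum_nonneg fun i _ => Real.rpow_nonneg (abs_nonneg _) _
  unfold pNorm
  have : ∀ i, |x i / c| ^ p = |x i| ^ p / c ^ p := by
    intro i
    rw [abs_div, abs_of_pos hc, Real.div_rpow (abs_nonneg _) hc.le]
  simp_rw [this, ← Finset.sum_div]
  rw [Real.div_rpow h0 (Real.rpow_nonneg hc.le _), one_div,
    Real.rpow_rpow_inv hc.le hp.ne']

lemma quadForm_le_bound {x : Fin n → ℝ} (h : ∀ i, |x i| ≤ 1) :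
    quadForm G x ≤ 2 * (n:ℝ) ^ 2 := by
  have hterm : ∀ i j : Fin n, (if G.Adj i j then (x i - x j) ^ 2 else 0) ≤ 4 := by
    intro i j
    split
    · have h1 := abs_le.1 (h i); have h2 := abs_le.1 (h j)
      nlinarith [h1.1, h1.2, h2.1, h2.2]
    · norm_num
  have : (∑ i, ∑ j, if G.Adj i j then (x i - x j) ^ 2 else 0) ≤ ∑ _i : Fin n, ∑ _j : Fin n, (4:ℝ) :=
    Finset.sum_le_sum fun i _ => Finset.sum_le_sum fun j _ => hterm i j
  simp only [Finset.sum_const, Finset.card_univ, Fintype.card_fin, nsmul_eq_mul] at this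
  unfold quadForm
  rw [div_le_iff₀ (by norm_num : (0:ℝ) < 2)]
  nlinarith [this]

end Aux

theorem mu_tendsto_muInf {n : ℕ} (G : SimpleGraph (Fin n)) (hE : ∃ a b, G.Adj a b) :
    Filter.Tendsto (fun p => mu G p) Filter.atTop (nhds (muInf G)) := by
  obtain ⟨a, b, hab⟩ := hE
  haveI : Nonempty (Fin n) := ⟨a⟩
  have hn0 : 0 < n := Fin.pos a
  have hn1 : (1:ℝ) ≤ (n:ℝ) := by exact_mod_cast hn0
  -- the indicator vector of vertex a
  set e : Fin n → ℝ := fun i => if i = a then 1 else 0 with he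
  have he_abs : ∀ i, |e i| ≤ 1 := by
    intro i; simp only [he]; split <;> simp
  have he_sum : ∀ p : ℝ, 0 < p → ∑ i, |e i| ^ p = 1 := by
    intro p hp
    rw [Finset.sum_eq_single a]
    · simp [he, Real.one_rpow]
    · intro j _ hj; simp [he, hj, Real.zero_rpow hp.ne']
    · simp
  have he_pNorm : ∀ p : ℝ, 0 < p → pNorm p e = 1 := by
    intro p hp
    rw [pNorm, he_sum p hp, Real.one_rpow]
  have he_supNorm : supNorm e = 1 := by
    refine le_antisymm (ciSup_le he_abs) ?_
    have := abs_le_supNorm e a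
    simpa [he] using this
  -- boundedness of the sets
  have bddInf : BddAbove {y | ∃ x : Fin n → ℝ, supNorm x = 1 ∧ quadForm G x = y} := by
    refine ⟨2 * (n:ℝ) ^ 2, ?_⟩
    rintro y ⟨x, hx, rfl⟩
    exact quadForm_le_bound G fun i => hx ▸ abs_le_supNorm x i
  have bddP : ∀ p : ℝ, 0 < p →
      BddAbove {y | ∃ x : Fin n → ℝ, pNorm p x = 1 ∧ quadForm G x = y} := by
    intro p hp
    refine ⟨2 * (n:ℝ) ^ 2, ?_⟩
    rintro y ⟨x, hx, rfl⟩
    exact quadForm_le_bound G (abs_le_one_of_pNorm hp hx)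
  have mu_nonneg : ∀ p : ℝ, 0 < p → 0 ≤ mu G p := by
    intro p hp
    exact le_trans (quadForm_nonneg G e) (le_csSup (bddP p hp) ⟨e, he_pNorm p hp, rfl⟩)
  -- upper bound: mu G p ≤ muInf G
  have hub : ∀ p : ℝ, 0 < p → mu G p ≤ muInf G := by
    intro p hp
    refine csSup_le ⟨quadForm G e, e, he_pNorm p hp, rfl⟩ ?_
    rintro y ⟨x, hx, rfl⟩
    have hx1 : ∀ i, |x i| ≤ 1 := abs_le_one_of_pNorm hp hx
    obtain ⟨i₀, hi₀⟩ := exists_supNorm_eq x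
    have hs1 : supNorm x ≤ 1 := hi₀ ▸ hx1 i₀
    have hs0 : 0 < supNorm x := by
      rcases eq_or_ne x 0 with h | h
      · exfalso
        have := sum_eq_one_of_pNorm hp hx
        simp [h, Real.zero_rpow hp.ne'] at this
      · obtain ⟨i, hi⟩ := Function.ne_iff.1 h
        have : 0 < |x i| := abs_pos.2 hi
        exact lt_of_lt_of_le this (abs_le_supNorm x i)
    set s := supNorm x with hsdef
    have hy : supNorm (fun i => x i / s) = 1 := by
      rw [supNorm_div x hs0, ← hsdef, div_self hs0.ne']
    have hq : quadForm G x ≤ quadForm G (fun i => x i / s) := by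
      have heq : (fun i => x i / s) = fun i => (1/s) * x i := by
        funext i; field_simp
      rw [heq, quadForm_smul]
      have h1s : (1:ℝ) ≤ (1/s) ^ 2 := by
        rw [one_le_sq_iff_one_le_abs, abs_of_pos (by positivity)]
        rw [le_div_iff₀ hs0, one_mul]; exact hs1
      nlinarith [quadForm_nonneg G x]
    exact le_trans hq (le_csSup bddInf ⟨_, hy, rfl⟩)
  -- lower bound: muInf G ≤ n^(2/p) * mu G p
  have hlb : ∀ p : ℝ, 0 < p → muInf G ≤ (n:ℝ) ^ (2/p) * mu G p := by
    intro p hp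
    refine csSup_le ⟨quadForm G e, e, he_supNorm, rfl⟩ ?_
    rintro y ⟨x, hx, rfl⟩
    have hx1 : ∀ i, |x i| ≤ 1 := fun i => hx ▸ abs_le_supNorm x i
    set c := pNorm p x with hc
    have hsum0 : (0:ℝ) ≤ ∑ i, |x i| ^ p :=
      Finset.sum_nonneg fun i _ => Real.rpow_nonneg (abs_nonneg _) _
    have hsum_le : ∑ i, |x i| ^ p ≤ (n:ℝ) := by
      calc ∑ i, |x i| ^ p ≤ ∑ _i : Fin n, (1:ℝ) :=
            Finset.sum_le_sum fun i _ =>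
              Real.rpow_le_one (abs_nonneg _) (hx1 i) hp.le
      _ = (n:ℝ) := by simp
    have hc_le : c ≤ (n:ℝ) ^ (1/p) :=
      Real.rpow_le_rpow hsum0 hsum_le (by positivity)
    have hsum_ge : (1:ℝ) ≤ ∑ i, |x i| ^ p := by
      obtain ⟨i₀, hi₀⟩ := exists_supNorm_eq x
      have h1 : |x i₀| = 1 := by rw [← hi₀, hx]
      calc (1:ℝ) = |x i₀| ^ p := by rw [h1, Real.one_rpow]
      _ ≤ ∑ i, |x i| ^ p :=
          Finset.single_le_sum (fun j _ => Real.rpow_nonneg (abs_nonneg _) _)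
            (Finset.mem_univ i₀)
    have hc_ge : (1:ℝ) ≤ c := by
      calc (1:ℝ) = (1:ℝ) ^ (1/p) := by rw [Real.one_rpow]
      _ ≤ c := Real.rpow_le_rpow (by norm_num) hsum_ge (by positivity)
    have hc0 : 0 < c := lt_of_lt_of_le one_pos hc_ge
    have hpy : pNorm p (fun i => x i / c) = 1 := by
      rw [pNorm_div hp x hc0, ← hc, div_self hc0.ne']
    have hq : quadForm G (fun i => x i / c) ≤ mu G p :=
      le_csSup (bddP p hp) ⟨_, hpy, rfl⟩
    have hqe : quadForm G (fun i => x i / c) = (1/c)^2 * quadForm G x := by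
      have heq : (fun i => x i / c) = fun i => (1/c) * x i := by
        funext i; field_simp
      rw [heq, quadForm_smul]
    have hc2 : c ^ 2 ≤ (n:ℝ) ^ (2/p) := by
      have : (n:ℝ) ^ (2/p) = ((n:ℝ) ^ (1/p)) ^ 2 := by
        rw [← Real.rpow_natCast ((n:ℝ) ^ (1/p)) 2, ← Real.rpow_mul (by positivity)]
        norm_num
        ring_nf
      rw [this]
      exact pow_le_pow_left₀ hc0.le hc_le 2
    calc quadForm G x = c ^ 2 * ((1/c)^2 * quadForm G x) := by
          field_simp
    _ ≤ c ^ 2 * mu G p := by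
        apply mul_le_mul_of_nonneg_left _ (sq_nonneg c)
        rw [← hqe]; exact hq
    _ ≤ (n:ℝ) ^ (2/p) * mu G p := mul_le_mul_of_nonneg_right hc2 (mu_nonneg p hp)
  -- n^(2/p) → 1
  have hnp : Filter.Tendsto (fun p : ℝ => (n:ℝ) ^ (2/p)) Filter.atTop (nhds 1) := by
    have h0 : Filter.Tendsto (fun p : ℝ => 2/p) Filter.atTop (nhds 0) :=
      Filter.Tendsto.div_atTop tendsto_const_nhds Filter.tendsto_id
    have hcont : ContinuousAt (fun y : ℝ => (n:ℝ) ^ y) 0 :=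
      Real.continuousAt_const_rpow (by positivity)
    have := hcont.tendsto.comp h0
    simpa [Function.comp_def, Real.rpow_zero] using this
  have hlow : Filter.Tendsto (fun p : ℝ => muInf G / (n:ℝ) ^ (2/p)) Filter.atTop
      (nhds (muInf G)) := by
    have := Filter.Tendsto.div (tendsto_const_nhds (x := muInf G)) hnp one_ne_zero
    simpa [Pi.div_def] using this
  apply tendsto_of_tendsto_of_tendsto_of_le_of_le' hlow tendsto_const_nhds
  · filter_upwards [Filter.eventually_gt_atTop 0] with p hp
    have hpos : (0:ℝ) < (n:ℝ) ^ (2/p) := Real.rpow_pos_of_pos (by positivity) _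
    rw [div_le_iff₀ hpos]
    calc muInf G ≤ (n:ℝ) ^ (2/p) * mu G p := hlb p hp
    _ = mu G p * (n:ℝ) ^ (2/p) := mul_comm _ _
  · filter_upwards [Filter.eventually_gt_atTop 0] with p hp
    exact hub p hp
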